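/- Let H₁ and H₂ be non-isomorphic k-uniform hypergraphs on the vertex set [n], with 0–1 adjacency tensors A₁, A₂ ∈ S^{k,n}. Then there exists a symmetric tensor P ∈ S^{k,n} such that Θ_P(A₁) ≠ Θ_P(A₂), where Θ_P(A) = max over permutations Π ∈ Sym(n) of ⟨P, Π·A⟩. -/

import Mathlib

/-- A tensor is symmetric if it is invariant under all permutations of its `k` indices. -/
def IsSymmTensor {k n : ℕ} (A : (Fin k → Fin n) → ℝ) : Prop :=
  ∀ (σ : Equiv.Perm (Fin k)) (i : Fin k → Fin n), A (i ∘ σ) = A i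

/-- The relabeling action of `Sym(n)` on tensors: `(Π·A)_{i₁,…,i_k} = A_{Π⁻¹ i₁,…,Π⁻¹ i_k}`. -/
def permAct {k n : ℕ} (π : Equiv.Perm (Fin n)) (A : (Fin k → Fin n) → ℝ) :
    (Fin k → Fin n) → ℝ :=
  fun i => A fun l => π.symm (i l)

/-- A `k`-uniform hypergraph on vertex set `Fin n`. -/
structure KUniformHypergraph (k n : ℕ) where
  edges : Finset (Finset (Fin n))
  uniform : ∀ e ∈ edges, e.card = k

open Classical in
/-- The 0–1 adjacency tensor of a hypergraph: entry 1 at `(i₁,…,i_k)` iff the indices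
are distinct and `{i₁,…,i_k}` is a hyperedge. -/
noncomputable def adjTensor {k n : ℕ} (H : KUniformHypergraph k n) : (Fin k → Fin n) → ℝ :=
  fun i => if Function.Injective i ∧ Finset.image i Finset.univ ∈ H.edges then 1 else 0

/-- Pattern alignment score `Θ_P(A) = max_{Π ∈ Sym(n)} ⟨P, Π·A⟩`. -/
noncomputable def alignScore {k n : ℕ} (P A : (Fin k → Fin n) → ℝ) : ℝ :=
  Finset.univ.sup' ⟨1, Finset.mem_univ 1⟩
    fun π : Equiv.Perm (Fin n) => ∑ i : Fin k → Fin n, P i * permAct π A i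

/-! ### Auxiliary lemmas -/

lemma countFiber {k n : ℕ} (e : Finset (Fin n)) (he : e.card = k) :
    (Finset.univ.filter (fun i : Fin k → Fin n =>
      Function.Injective i ∧ Finset.image i Finset.univ = e)).card = Nat.factorial k := by
  classical
  rw [← Fintype.card_subtype]
  have hc : Fintype.card {i : Fin k → Fin n //
      Function.Injective i ∧ Finset.image i Finset.univ = e} = Fintype.card (Fin k ↪ e) := by
    refine Fintype.card_congr ?_
    refine
      { toFun := fun x => ⟨fun l => ⟨x.1 l, by
            obtain ⟨i, hi, him⟩ := x; subst him
            exact Finset.mem_image_of_mem i (Finset.mem_univ l)⟩,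
          fun a b hab => x.2.1 (congrArg Subtype.val hab)⟩
        invFun := fun f => ⟨fun l => (f l : Fin n),
          fun a b hab => f.injective (Subtype.ext hab), ?_⟩
        left_inv := fun x => Subtype.ext rfl
        right_inv := fun f => DFunLike.ext _ _ fun l => Subtype.ext rfl }
    · apply Finset.eq_of_subset_of_card_le
      · intro x hx
        simp only [Finset.mem_image] at hx
        obtain ⟨l, _, rfl⟩ := hx
        exact (f l).2
      · rw [Finset.card_image_of_injective _ (fun a b hab => f.injective (Subtype.ext hab))]
        simp [he]
  rw [hc, Fintype.card_embedding_eq]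
  simp [he, Nat.descFactorial_self]

open Classical in
lemma sumIndicator {k n : ℕ} (S : Finset (Finset (Fin n))) (hS : ∀ e ∈ S, e.card = k) :
    ∑ i : Fin k → Fin n,
      (if Function.Injective i ∧ Finset.image i Finset.univ ∈ S then (1:ℝ) else 0)
      = (Nat.factorial k : ℝ) * S.card := by
  rw [Finset.sum_boole]
  have hcard : (Finset.univ.filter (fun i : Fin k → Fin n =>
      Function.Injective i ∧ Finset.image i Finset.univ ∈ S)).card = S.card * Nat.factorial k := by
    rw [Finset.card_eq_sum_card_fiberwise
      (f := fun i : Fin k → Fin n => Finset.image i Finset.univ) (t := S)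
      (fun i hi => (Finset.mem_filter.mp hi).2.2)]
    rw [Finset.sum_congr rfl (fun e he => ?_), Finset.sum_const, smul_eq_mul]
    rw [Finset.filter_filter]
    have heq : (Finset.univ.filter fun i : Fin k → Fin n =>
        (Function.Injective i ∧ Finset.image i Finset.univ ∈ S) ∧
          Finset.image i Finset.univ = e)
        = Finset.univ.filter fun i : Fin k → Fin n =>
        Function.Injective i ∧ Finset.image i Finset.univ = e := by
      apply Finset.filter_congr
      intro i _
      constructor
      · rintro ⟨⟨h1, _⟩, h3⟩; exact ⟨h1, h3⟩
      · rintro ⟨h1, h3⟩; exact ⟨⟨h1, h3 ▸ he⟩, h3⟩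
    rw [heq, countFiber e (hS e he)]
  rw [hcard]
  push_cast
  ring

lemma image_perm_injective {n : ℕ} (π : Equiv.Perm (Fin n)) :
    Function.Injective (fun e : Finset (Fin n) => e.image ⇑π) := by
  intro s t h
  have := congrArg (Finset.image ⇑π.symm) h
  simpa [Finset.image_image] using this

lemma mem_image_perm_iff {n : ℕ} (π : Equiv.Perm (Fin n)) (E : Finset (Finset (Fin n)))
    (s : Finset (Fin n)) :
    s.image ⇑π.symm ∈ E ↔ s ∈ E.image (fun e => e.image ⇑π) := by
  constructor
  · intro h
    exact Finset.mem_image.mpr ⟨s.image ⇑π.symm, h, by simp [Finset.image_image]⟩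
  · intro h
    obtain ⟨t, ht, rfl⟩ := Finset.mem_image.mp h
    simpa [Finset.image_image] using ht

open Classical in
lemma innerEq {k n : ℕ} (H₁ H : KUniformHypergraph k n) (π : Equiv.Perm (Fin n)) :
    ∑ i : Fin k → Fin n, adjTensor H₁ i * permAct π (adjTensor H) i
      = (Nat.factorial k : ℝ) *
        ((H₁.edges ∩ H.edges.image (fun e => e.image ⇑π)).card) := by
  have hpt : ∀ i : Fin k → Fin n, adjTensor H₁ i * permAct π (adjTensor H) i =
      (if Function.Injective i ∧ Finset.image i Finset.univ ∈
          H₁.edges ∩ H.edges.image (fun e => e.image ⇑π) then (1:ℝ) else 0) := by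
    intro i
    unfold adjTensor permAct
    have h1 : Function.Injective (fun l => π.symm (i l)) ↔ Function.Injective i :=
      Equiv.comp_injective i π.symm
    have h2 : Finset.image (fun l => π.symm (i l)) Finset.univ ∈ H.edges ↔
        Finset.image i Finset.univ ∈ H.edges.image (fun e => e.image ⇑π) := by
      rw [show Finset.image (fun l => π.symm (i l)) Finset.univ
          = (Finset.image i Finset.univ).image ⇑π.symm by rw [Finset.image_image]; rfl]
      exact mem_image_perm_iff π H.edges _
    by_cases hi : Function.Injective i <;>
      by_cases hm1 : Finset.image i Finset.univ ∈ H₁.edges <;>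
        by_cases hm2 : Finset.image i Finset.univ ∈ H.edges.image (fun e => e.image ⇑π) <;>
          simp [hi, hm1, hm2, h1, h2, Finset.mem_inter]
  rw [Finset.sum_congr rfl (fun i _ => hpt i)]
  exact sumIndicator _ (fun e he => H₁.uniform e (Finset.mem_inter.mp he).1)

open Classical in
lemma sumAdj {k n : ℕ} (H : KUniformHypergraph k n) :
    ∑ i : Fin k → Fin n, adjTensor H i = (Nat.factorial k : ℝ) * H.edges.card := by
  rw [show ∑ i : Fin k → Fin n, adjTensor H i = ∑ i : Fin k → Fin n,
      (if Function.Injective i ∧ Finset.image i Finset.univ ∈ H.edges then (1:ℝ) else 0) from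
    Finset.sum_congr rfl (fun i _ => by unfold adjTensor; split_ifs <;> rfl)]
  exact sumIndicator _ H.uniform

lemma adjSymm {k n : ℕ} (H : KUniformHypergraph k n) : IsSymmTensor (adjTensor H) := by
  intro σ i
  unfold adjTensor
  have h1 : Function.Injective (i ∘ ⇑σ) ↔ Function.Injective i := Equiv.injective_comp σ i
  have h2 : Finset.image (i ∘ ⇑σ) Finset.univ = Finset.image i Finset.univ := by
    rw [← Finset.image_image]; simp
  apply if_congr (and_congr h1 (by rw [h2])) rfl rfl

/-- **Pattern alignment completeness**: non-isomorphic `k`-uniform hypergraphs on `[n]`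
are separated by the pattern alignment score of some symmetric template tensor. -/
theorem pattern_alignment_completeness (k n : ℕ) (hk : 1 ≤ k) (hn : 1 ≤ n)
    (H₁ H₂ : KUniformHypergraph k n)
    (hniso : ¬ ∃ σ : Equiv.Perm (Fin n), H₁.edges.image (fun e => e.image σ) = H₂.edges) :
    ∃ P : (Fin k → Fin n) → ℝ, IsSymmTensor P ∧
      alignScore P (adjTensor H₁) ≠ alignScore P (adjTensor H₂) := by
  classical
  have hfac : (Nat.factorial k : ℝ) ≠ 0 := Nat.cast_ne_zero.mpr k.factorial_ne_zero
  by_cases hcard : H₁.edges.card = H₂.edges.card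
  · -- same number of edges: use P = adjTensor H₁
    refine ⟨adjTensor H₁, adjSymm H₁, ?_⟩
    have key : ∀ H : KUniformHypergraph k n,
        alignScore (adjTensor H₁) (adjTensor H) = Finset.univ.sup' ⟨1, Finset.mem_univ 1⟩
          (fun π : Equiv.Perm (Fin n) => (Nat.factorial k : ℝ) *
            ((H₁.edges ∩ H.edges.image (fun e => e.image ⇑π)).card)) := by
      intro H
      unfold alignScore
      exact Finset.sup'_congr _ rfl (fun π _ => innerEq H₁ H π)
    have score1 : alignScore (adjTensor H₁) (adjTensor H₁)
        = (Nat.factorial k : ℝ) * H₁.edges.card := by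
      rw [key H₁]
      apply le_antisymm
      · apply Finset.sup'_le
        intro π _
        apply mul_le_mul_of_nonneg_left _ (by positivity)
        exact_mod_cast Finset.card_le_card Finset.inter_subset_left
      · have h1 : H₁.edges ∩ H₁.edges.image (fun e => e.image ⇑(1 : Equiv.Perm (Fin n)))
            = H₁.edges := by
          simp [Finset.image_id']
        calc (Nat.factorial k : ℝ) * H₁.edges.card
            = (Nat.factorial k : ℝ) *
              ((H₁.edges ∩ H₁.edges.image (fun e => e.image ⇑(1 : Equiv.Perm (Fin n)))).card) := by
              rw [h1]
          _ ≤ _ := Finset.le_sup'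
              (fun π : Equiv.Perm (Fin n) => (Nat.factorial k : ℝ) *
                ((H₁.edges ∩ H₁.edges.image (fun e => e.image ⇑π)).card))
              (Finset.mem_univ (1 : Equiv.Perm (Fin n)))
    intro heq
    rw [score1, key H₂] at heq
    obtain ⟨π, _, hπ⟩ := Finset.exists_mem_eq_sup'
      (⟨1, Finset.mem_univ 1⟩ : (Finset.univ : Finset (Equiv.Perm (Fin n))).Nonempty)
      (fun π : Equiv.Perm (Fin n) => (Nat.factorial k : ℝ) *
        ((H₁.edges ∩ H₂.edges.image (fun e => e.image ⇑π)).card))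
    rw [hπ] at heq
    have hcards : (H₁.edges ∩ H₂.edges.image (fun e => e.image ⇑π)).card = H₁.edges.card := by
      have := mul_left_cancel₀ hfac heq
      exact_mod_cast this.symm
    have hsub : H₁.edges ⊆ H₂.edges.image (fun e => e.image ⇑π) := by
      have : H₁.edges ∩ H₂.edges.image (fun e => e.image ⇑π) = H₁.edges :=
        Finset.eq_of_subset_of_card_le Finset.inter_subset_left (by rw [hcards])
      rw [← this]
      exact Finset.inter_subset_right
    have hc2 : (H₂.edges.image (fun e => e.image ⇑π)).card = H₁.edges.card := by
      rw [Finset.card_image_of_injective _ (image_perm_injective π), hcard]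
    have heqset : H₁.edges = H₂.edges.image (fun e => e.image ⇑π) :=
      Finset.eq_of_subset_of_card_le hsub (le_of_eq hc2)
    apply hniso
    refine ⟨π⁻¹, ?_⟩
    have hcomp : (⇑π⁻¹ ∘ ⇑π) = id := by ext x; simp
    rw [heqset, Finset.image_image]
    ext e
    simp only [Finset.mem_image, Function.comp, Finset.image_image, hcomp, Finset.image_id]
    constructor
    · rintro ⟨t, ht, rfl⟩; exact ht
    · intro he; exact ⟨e, he, rfl⟩
  · -- different number of edges: use P = 1
    refine ⟨fun _ => 1, fun σ i => rfl, ?_⟩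
    have key : ∀ H : KUniformHypergraph k n,
        alignScore (fun _ => 1) (adjTensor H) = (Nat.factorial k : ℝ) * H.edges.card := by
      intro H
      unfold alignScore
      have hconst : ∀ π : Equiv.Perm (Fin n),
          ∑ i : Fin k → Fin n, (1:ℝ) * permAct π (adjTensor H) i
            = (Nat.factorial k : ℝ) * H.edges.card := by
        intro π
        have hre : ∑ i : Fin k → Fin n, permAct π (adjTensor H) i
            = ∑ i : Fin k → Fin n, adjTensor H i := by
          have := Equiv.sum_comp (Equiv.arrowCongr (Equiv.refl (Fin k)) π.symm)
            (adjTensor H)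
          calc ∑ i : Fin k → Fin n, permAct π (adjTensor H) i
              = ∑ i : Fin k → Fin n,
                adjTensor H ((Equiv.arrowCongr (Equiv.refl (Fin k)) π.symm) i) :=
                Finset.sum_congr rfl (fun i _ => rfl)
            _ = _ := this
        simp only [one_mul]
        rw [hre, sumAdj]
      refine (Finset.sup'_congr _ rfl (fun π _ => hconst π)).trans ?_
      exact Finset.sup'_const _ _
    rw [key H₁, key H₂]
    intro heq
    exact hcard (by exact_mod_cast mul_left_cancel₀ hfac heq)
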